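/- Let G be a gyrogroup and H a subgyrogroup. The relation a ∼_H b, defined by (⊖a ⊕ b ∈ H and gyr[⊖a, b](H) = H), is an equivalence relation on G. -/
import Mathlib


/-- A gyrogroup: a magma with a left identity, left inverses, and
gyroautomorphisms satisfying the left gyroassociative law and the
left loop property. -/
class Gyrogroup (G : Type*) where
  add : G → G → G
  zero : G
  neg : G → G
  gyr : G → G → G → G
  zero_add : ∀ a : G, add zero a = a
  neg_add : ∀ a : G, add (neg a) a = zero
  gyr_add : ∀ a b c d : G, gyr a b (add c d) = add (gyr a b c) (gyr a b d)
  gyr_bijective : ∀ a b : G, Function.Bijective (gyr a b)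
  left_gyroassoc : ∀ a b c : G, add a (add b c) = add (add a b) (gyr a b c)
  left_loop : ∀ a b : G, gyr a b = gyr (add a b) b

open Gyrogroup

section Aux

variable {G : Type*} [Gyrogroup G]

lemma gg_inj (a : G) : Function.Injective (add a) := by
  intro x y h
  have key : ∀ z : G, add (neg a) (add a z) = gyr (neg a) a z := by
    intro z
    rw [left_gyroassoc, Gyrogroup.neg_add, Gyrogroup.zero_add]
  have h2 := congrArg (add (neg a)) h
  rw [key, key] at h2
  exact (gyr_bijective (neg a) a).1 h2

lemma gg_gyr_zero_left (b c : G) : gyr (zero : G) b c = c := by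
  apply gg_inj b
  have := left_gyroassoc (zero : G) b c
  rw [Gyrogroup.zero_add, Gyrogroup.zero_add] at this
  exact this.symm

lemma gg_gyr_negself (a x : G) : gyr (neg a) a x = x := by
  rw [left_loop (neg a) a, Gyrogroup.neg_add]
  exact gg_gyr_zero_left a x

lemma gg_neg_add_cancel (a x : G) : add (neg a) (add a x) = x := by
  rw [left_gyroassoc, Gyrogroup.neg_add, Gyrogroup.zero_add, gg_gyr_negself]

lemma gg_add_neg_cancel (a x : G) : add a (add (neg a) x) = x := by
  apply gg_inj (neg a)
  rw [gg_neg_add_cancel]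

lemma gg_add_zero (a : G) : add a (zero : G) = a := by
  have := gg_add_neg_cancel a a
  rwa [Gyrogroup.neg_add] at this

lemma gg_eq_neg (u x : G) (h : add u x = zero) : x = neg u := by
  have h2 := congrArg (add (neg u)) h
  rwa [gg_neg_add_cancel, gg_add_zero] at h2

lemma gg_neg_neg (a : G) : neg (neg a) = a :=
  (gg_eq_neg (neg a) a (Gyrogroup.neg_add a)).symm

lemma gg_add_neg (a : G) : add a (neg a) = zero := by
  have := Gyrogroup.neg_add (neg a)
  rwa [gg_neg_neg] at this

lemma gg_gyr_zero (a b : G) : gyr a b (zero : G) = zero := by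
  have h : add (gyr a b (zero : G)) (gyr a b (zero : G)) = gyr a b (zero : G) := by
    rw [← gyr_add, Gyrogroup.zero_add]
  have h2 := gg_neg_add_cancel (gyr a b (zero : G)) (gyr a b (zero : G))
  rw [h, Gyrogroup.neg_add] at h2
  exact h2.symm

lemma gg_gyr_neg (a b x : G) : gyr a b (neg x) = neg (gyr a b x) := by
  have h : add (gyr a b (neg x)) (gyr a b x) = zero := by
    rw [← gyr_add, Gyrogroup.neg_add, gg_gyr_zero]
  have h2 := gg_eq_neg _ _ h
  rw [h2, gg_neg_neg]

lemma gg_gyrator (a b x : G) : gyr a b x = add (neg (add a b)) (add a (add b x)) := by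
  rw [left_gyroassoc a b x, gg_neg_add_cancel]

lemma gg_star (a b x : G) : gyr (neg a) (add a b) (gyr a b x) = x := by
  apply gg_inj b
  have h1 : add (neg a) (add (add a b) (gyr a b x))
      = add b (gyr (neg a) (add a b) (gyr a b x)) := by
    rw [left_gyroassoc (neg a) (add a b) (gyr a b x), gg_neg_add_cancel]
  rw [← left_gyroassoc a b x, gg_neg_add_cancel] at h1
  exact h1.symm

lemma gg_comp (a b c x : G) :
    gyr a (add b c) (gyr b c x) = gyr (add a b) (gyr a b c) (gyr a b x) := by
  apply gg_inj (add a (add b c))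
  calc add (add a (add b c)) (gyr a (add b c) (gyr b c x))
      = add a (add (add b c) (gyr b c x)) := (left_gyroassoc _ _ _).symm
    _ = add a (add b (add c x)) := by rw [← left_gyroassoc b c x]
    _ = add (add a b) (gyr a b (add c x)) := left_gyroassoc _ _ _
    _ = add (add a b) (add (gyr a b c) (gyr a b x)) := by rw [gyr_add]
    _ = add (add (add a b) (gyr a b c)) (gyr (add a b) (gyr a b c) (gyr a b x)) :=
        left_gyroassoc _ _ _
    _ = add (add a (add b c)) (gyr (add a b) (gyr a b c) (gyr a b x)) := by
        rw [← left_gyroassoc a b c]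

lemma gg_sum_inv (a b : G) : gyr a b (add (neg b) (neg a)) = neg (add a b) := by
  apply gg_eq_neg
  rw [← left_gyroassoc a b (add (neg b) (neg a)), gg_add_neg_cancel, gg_add_neg]

lemma gg_gyr_self_neg (e y : G) : gyr e (neg e) y = y := by
  rw [left_loop e (neg e), gg_add_neg]
  exact gg_gyr_zero_left _ _

lemma gg_club (b d x : G) : gyr b (add (neg b) d) x = gyr (neg d) b x := by
  have h := gg_comp (neg d) b (add (neg b) d) x
  rw [gg_add_neg_cancel b d, gg_gyr_negself] at h
  have h2 : gyr (neg d) b (add (neg b) d) = neg (add (neg d) b) := by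
    have h3 := gg_sum_inv (neg d) b
    rwa [gg_neg_neg] at h3
  rw [h2, gg_gyr_self_neg] at h
  exact h

lemma gg_inv_pair (a b x : G) : gyr (neg b) a (gyr (neg a) b x) = x := by
  have h := gg_star (neg a) b x
  rwa [gg_neg_neg, gg_club a b] at h

lemma gg_inv_pair' (p q x : G) : gyr p q (gyr (neg q) (neg p) x) = x := by
  have h := gg_inv_pair q (neg p) x
  rwa [gg_neg_neg] at h

end Aux

/-- For a subgyrogroup H (a nonempty subset closed under ⊕ and inverses),
the relation a ∼_H b ↔ (⊖a ⊕ b ∈ H ∧ gyr[⊖a,b](H) = H) is an equivalence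
relation on G. -/
theorem simH_equivalence {G : Type*} [Gyrogroup G] (H : Set G)
    (hne : H.Nonempty)
    (hadd : ∀ a ∈ H, ∀ b ∈ H, add a b ∈ H)
    (hneg : ∀ a ∈ H, neg a ∈ H) :
    Equivalence (fun a b : G => add (neg a) b ∈ H ∧ gyr (neg a) b '' H = H) := by
  have hzero : (zero : G) ∈ H := by
    obtain ⟨x, hx⟩ := hne
    have := hadd _ (hneg x hx) _ hx
    rwa [Gyrogroup.neg_add] at this
  -- composing the two mutually inverse gyrations gives back any set
  have himg : ∀ (a b : G) (S : Set G), gyr (neg b) a '' (gyr (neg a) b '' S) = S := by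
    intro a b S
    rw [Set.image_image]
    simp only [gg_inv_pair]
    exact Set.image_id' S
  -- gyrations by two elements of H fix H setwise
  have hHH : ∀ p ∈ H, ∀ q ∈ H, gyr p q '' H = H := by
    intro p hp q hq
    apply Set.Subset.antisymm
    · rintro _ ⟨x, hx, rfl⟩
      rw [gg_gyrator]
      exact hadd _ (hneg _ (hadd _ hp _ hq)) _ (hadd _ hp _ (hadd _ hq _ hx))
    · intro y hy
      refine ⟨gyr (neg q) (neg p) y, ?_, gg_inv_pair' p q y⟩
      rw [gg_gyrator]
      exact hadd _ (hneg _ (hadd _ (hneg _ hq) _ (hneg _ hp))) _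
        (hadd _ (hneg _ hq) _ (hadd _ (hneg _ hp) _ hy))
  constructor
  · -- reflexivity
    intro a
    constructor
    · rw [Gyrogroup.neg_add]; exact hzero
    · rw [show gyr (neg a) a = fun x : G => x from funext fun x => gg_gyr_negself a x]
      exact Set.image_id' H
  · -- symmetry
    intro a b hab
    obtain ⟨h1, h2⟩ := hab
    have himgba : gyr (neg b) a '' H = H := by
      conv_lhs => rw [← h2]
      exact himg a b H
    constructor
    · have key : add (neg b) a = gyr (neg b) a (neg (add (neg a) b)) := by
        have h3 := gg_sum_inv (neg a) b
        rw [gg_neg_neg] at h3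
        rw [← h3, gg_inv_pair]
      have hmem : gyr (neg b) a (neg (add (neg a) b)) ∈ gyr (neg b) a '' H :=
        Set.mem_image_of_mem _ (hneg _ h1)
      rw [himgba] at hmem
      rw [key]
      exact hmem
    · exact himgba
  · -- transitivity
    intro a b c hab hbc
    obtain ⟨h1, h2⟩ := hab
    obtain ⟨h3, h4⟩ := hbc
    have hp : add (neg a) b ∈ H := h1
    have hq' : gyr (neg a) b (add (neg b) c) ∈ H := by
      have := Set.mem_image_of_mem (gyr (neg a) b) h3
      rwa [h2] at this
    have hc : add b (add (neg b) c) = c := gg_add_neg_cancel b c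
    have hdecomp : ∀ y : G, gyr (neg a) c y
        = gyr (add (neg a) b) (gyr (neg a) b (add (neg b) c))
            (gyr (neg a) b (gyr (neg b) c y)) := by
      intro y
      have h5 := gg_comp (neg a) b (add (neg b) c) (gyr (neg b) c y)
      rw [hc] at h5
      have h6 : gyr b (add (neg b) c) (gyr (neg b) c y) = y := by
        rw [gg_club b c]
        exact gg_inv_pair b c y
      rw [h6] at h5
      exact h5
    constructor
    · have hm := left_gyroassoc (neg a) b (add (neg b) c)
      rw [hc] at hm
      rw [hm]
      exact hadd _ hp _ hq'
    · have e1 : gyr (neg a) c '' H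
          = gyr (add (neg a) b) (gyr (neg a) b (add (neg b) c)) ''
              (gyr (neg a) b '' (gyr (neg b) c '' H)) := by
        rw [Set.image_image, Set.image_image]
        exact Set.image_congr' hdecomp
      rw [e1, h4, h2]
      exact hHH _ hp _ hq'
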